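/- Let γ : ℝ → (0, ∞) be bounded and integrable and f : [0,T] × ℝ → ℝ measurable with ∫_0^T ∫_ℝ (f² + |∂_x f|²)/γ dx dt < ∞. Then the limits of x ↦ f(·, x) in L²([0,T]) as x → ±∞ exist and vanish; in particular f(t,y) = ∫_{+∞}^{y} ∂_x f(t,x) dx and ∫_ℝ ∂_x f(t,x) dx = 0 for a.e. (t,y). -/

import Mathlib

open MeasureTheory Real Filter Set intervalIntegral


lemma aux_limit_zero_atTop {u : ℝ → ℝ} (hu : Integrable (fun x => u x ^ 2))
    {c : ℝ} (h : Tendsto u atTop (nhds c)) : c = 0 := by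
  by_contra hc
  have hc2 : 0 < c ^ 2 := by positivity
  have h2 : Tendsto (fun x => u x ^ 2) atTop (nhds (c ^ 2)) := h.pow 2
  have hev : ∀ᶠ x in atTop, c ^ 2 / 2 ≤ ‖u x ^ 2‖ := by
    filter_upwards [h2.eventually (eventually_gt_nhds
      (by linarith : c ^ 2 / 2 < c ^ 2))] with x hx
    rw [Real.norm_eq_abs, abs_of_nonneg (sq_nonneg _)]
    exact hx.le
  obtain ⟨A, hA⟩ := eventually_atTop.mp hev
  have hfin := hu.measure_norm_ge_lt_top (show (0:ℝ) < c ^ 2 / 2 by linarith)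
  have hsub : Ici A ⊆ {x | c ^ 2 / 2 ≤ ‖u x ^ 2‖} := fun x hx => hA x hx
  have := (measure_mono hsub).trans_lt hfin
  simp [Real.volume_Ici] at this

lemma aux_limit_zero_atBot {u : ℝ → ℝ} (hu : Integrable (fun x => u x ^ 2))
    {c : ℝ} (h : Tendsto u atBot (nhds c)) : c = 0 := by
  by_contra hc
  have hc2 : 0 < c ^ 2 := by positivity
  have h2 : Tendsto (fun x => u x ^ 2) atBot (nhds (c ^ 2)) := h.pow 2
  have hev : ∀ᶠ x in atBot, c ^ 2 / 2 ≤ ‖u x ^ 2‖ := by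
    filter_upwards [h2.eventually (eventually_gt_nhds
      (by linarith : c ^ 2 / 2 < c ^ 2))] with x hx
    rw [Real.norm_eq_abs, abs_of_nonneg (sq_nonneg _)]
    exact hx.le
  obtain ⟨A, hA⟩ := eventually_atBot.mp hev
  have hfin := hu.measure_norm_ge_lt_top (show (0:ℝ) < c ^ 2 / 2 by linarith)
  have hsub : Iic A ⊆ {x | c ^ 2 / 2 ≤ ‖u x ^ 2‖} := fun x hx => hA x hx
  have := (measure_mono hsub).trans_lt hfin
  simp [Real.volume_Iic] at this

/-- Cauchy–Schwarz with weight: `(∫_S |u|)² ≤ (∫_S u²/γ) * (∫_S γ)`. -/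
lemma aux_cauchy_schwarz {γ : ℝ → ℝ} (hγpos : ∀ x, 0 < γ x)
    (hγae : AEMeasurable γ (volume : Measure ℝ)) (u : ℝ → ℝ) (hu : Measurable u)
    (S : Set ℝ)
    (hB : IntegrableOn (fun x => u x ^ 2 / γ x) S)
    (hγS : IntegrableOn γ S) :
    (∫ x in S, |u x|) ^ 2 ≤ (∫ x in S, u x ^ 2 / γ x) * (∫ x in S, γ x) := by
  set ν := (volume : Measure ℝ).restrict S with hν
  have hγae' : AEMeasurable γ ν := hγae.restrict
  have hsae : AEMeasurable (fun x => Real.sqrt (γ x)) ν :=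
    Real.continuous_sqrt.measurable.comp_aemeasurable hγae'
  have hfs : AEStronglyMeasurable (fun x => |u x| / Real.sqrt (γ x)) ν :=
    (hu.abs.aemeasurable.div hsae).aestronglyMeasurable
  have hgs : AEStronglyMeasurable (fun x => Real.sqrt (γ x)) ν :=
    hsae.aestronglyMeasurable
  have hfsq : ∀ x, (|u x| / Real.sqrt (γ x)) ^ 2 = u x ^ 2 / γ x := by
    intro x
    rw [div_pow, sq_abs, Real.sq_sqrt (hγpos x).le]
  have hgsq : ∀ x, (Real.sqrt (γ x)) ^ 2 = γ x := fun x => Real.sq_sqrt (hγpos x).le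
  have hmemf : MemLp (fun x => |u x| / Real.sqrt (γ x)) 2 ν :=
    (memLp_two_iff_integrable_sq hfs).mpr (by simpa only [hfsq, IntegrableOn] using hB)
  have hmemg : MemLp (fun x => Real.sqrt (γ x)) 2 ν :=
    (memLp_two_iff_integrable_sq hgs).mpr (by simpa only [hgsq, IntegrableOn] using hγS)
  have hpq : Real.HolderConjugate 2 2 := Real.holderConjugate_iff.mpr ⟨by norm_num, by norm_num⟩
  have hCS := integral_mul_le_Lp_mul_Lq_of_nonneg hpq
    (Eventually.of_forall fun x => div_nonneg (abs_nonneg _) (Real.sqrt_nonneg _))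
    (Eventually.of_forall fun x => Real.sqrt_nonneg _)
    (by simpa using hmemf) (by simpa using hmemg)
  have hprod : (fun x => |u x| / Real.sqrt (γ x) * Real.sqrt (γ x)) = fun x => |u x| := by
    funext x
    rw [div_mul_cancel₀]
    exact (Real.sqrt_pos.mpr (hγpos x)).ne'
  rw [hprod] at hCS
  have hA : ∫ a in S, (|u a| / Real.sqrt (γ a)) ^ (2:ℝ) ∂volume = ∫ x in S, u x ^ 2 / γ x := by
    refine integral_congr_ae (Eventually.of_forall fun x => ?_)
    show (|u x| / Real.sqrt (γ x)) ^ (2:ℝ) = u x ^ 2 / γ x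
    rw [Real.rpow_two]
    exact hfsq x
  have hBB : ∫ a in S, (Real.sqrt (γ a)) ^ (2:ℝ) ∂volume = ∫ x in S, γ x := by
    refine integral_congr_ae (Eventually.of_forall fun x => ?_)
    show (Real.sqrt (γ x)) ^ (2:ℝ) = γ x
    rw [Real.rpow_two]
    exact hgsq x
  rw [hA, hBB] at hCS
  have ha : (0:ℝ) ≤ ∫ x in S, u x ^ 2 / γ x :=
    integral_nonneg fun x => div_nonneg (sq_nonneg _) (hγpos x).le
  have hb : (0:ℝ) ≤ ∫ x in S, γ x := integral_nonneg fun x => (hγpos x).le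
  have hsq : ((∫ x in S, u x ^ 2 / γ x) ^ (1/(2:ℝ)) * (∫ x in S, γ x) ^ (1/(2:ℝ))) ^ 2
      = (∫ x in S, u x ^ 2 / γ x) * (∫ x in S, γ x) := by
    rw [← Real.sqrt_eq_rpow, ← Real.sqrt_eq_rpow, mul_pow, Real.sq_sqrt ha, Real.sq_sqrt hb]
  calc (∫ x in S, |u x|) ^ 2
      ≤ ((∫ x in S, u x ^ 2 / γ x) ^ (1/(2:ℝ)) * (∫ x in S, γ x) ^ (1/(2:ℝ))) ^ 2 := by
        apply pow_le_pow_left₀ (integral_nonneg fun x => abs_nonneg _) hCS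
    _ = _ := hsq

lemma aux_tail_top {γ : ℝ → ℝ} (hγint : Integrable γ) :
    Tendsto (fun x : ℝ => ∫ s in Ioi x, γ s) atTop (nhds 0) := by
  have hempty : ⋂ x : ℝ, Ioi x = (∅ : Set ℝ) := by
    ext y
    simp only [mem_iInter, mem_Ioi, mem_empty_iff_false, iff_false, not_forall, not_lt]
    exact ⟨y, le_refl y⟩
  have := tendsto_setIntegral_of_antitone (μ := (volume : Measure ℝ)) (f := γ)
    (s := fun x : ℝ => Ioi x) (fun _ => measurableSet_Ioi)
    (fun i j hij => Ioi_subset_Ioi hij) ⟨0, hγint.integrableOn⟩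
  rw [hempty] at this
  simpa using this

lemma aux_tail_bot {γ : ℝ → ℝ} (hγint : Integrable γ) :
    Tendsto (fun x : ℝ => ∫ s in Iic x, γ s) atBot (nhds 0) := by
  have hempty : ⋂ x : ℝ, Iic (-x) = (∅ : Set ℝ) := by
    ext y
    simp only [mem_iInter, mem_Iic, mem_empty_iff_false, iff_false, not_forall, not_le]
    exact ⟨-y + 1, by linarith⟩
  have h1 := tendsto_setIntegral_of_antitone (μ := (volume : Measure ℝ)) (f := γ)
    (s := fun x : ℝ => Iic (-x)) (fun _ => measurableSet_Iic)
    (fun i j hij => Iic_subset_Iic.mpr (by linarith)) ⟨0, hγint.integrableOn⟩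
  rw [hempty] at h1
  simp only [setIntegral_empty] at h1
  have h2 : Tendsto (fun x : ℝ => -x) atBot atTop := tendsto_neg_atBot_atTop
  have h3 := h1.comp h2
  have heq : ((fun i : ℝ => ∫ x in Iic (-i), γ x) ∘ fun x : ℝ => -x)
      = fun x : ℝ => ∫ s in Iic x, γ s := by
    funext x; simp [Function.comp, neg_neg]
  rwa [heq] at h3

theorem L2_limits_at_infinity_vanish
    (T : ℝ) (hT : 0 < T)
    (γ : ℝ → ℝ) (hγpos : ∀ x, 0 < γ x) (hγint : Integrable γ)
    (hγbdd : ∃ C : ℝ, ∀ x, γ x ≤ C)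
    (f f' : ℝ → ℝ → ℝ)
    (hfmeas : Measurable (Function.uncurry f))
    (hf'meas : Measurable (Function.uncurry f'))
    (hFTC : ∀ t ∈ Set.Icc (0 : ℝ) T, ∀ a b : ℝ,
      f t b - f t a = ∫ x in a..b, f' t x)
    (hfin : Integrable (fun p : ℝ × ℝ => ((f p.1 p.2) ^ 2 + (f' p.1 p.2) ^ 2) / γ p.2)
      ((volume : Measure ℝ).restrict (Set.Ioc 0 T) |>.prod (volume : Measure ℝ))) :
    Tendsto (fun x : ℝ => ∫ t in Set.Ioc (0 : ℝ) T, (f t x) ^ 2) atTop (nhds 0) ∧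
    Tendsto (fun x : ℝ => ∫ t in Set.Ioc (0 : ℝ) T, (f t x) ^ 2) atBot (nhds 0) ∧
    (∀ᵐ t ∂ (volume : Measure ℝ).restrict (Set.Ioc 0 T),
      (∀ᵐ y ∂ (volume : Measure ℝ), f t y = -∫ x in Set.Ioi y, f' t x) ∧
      (∫ x : ℝ, f' t x) = 0) := by
  obtain ⟨C, hC⟩ := hγbdd
  have hCpos : 0 < C := lt_of_lt_of_le (hγpos 0) (hC 0)
  set μ := (volume : Measure ℝ).restrict (Set.Ioc 0 T) with hμdef
  have hγae : AEMeasurable γ (volume : Measure ℝ) := hγint.aemeasurable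
  have hγprod : AEMeasurable (fun p : ℝ × ℝ => γ p.2) (μ.prod volume) :=
    (hγae.aestronglyMeasurable.comp_snd).aemeasurable
  -- Integrability of B = f'²/γ on the product
  have hBmeas : AEStronglyMeasurable (fun p : ℝ × ℝ => f' p.1 p.2 ^ 2 / γ p.2) (μ.prod volume) := by
    have h1 : Measurable (fun p : ℝ × ℝ => f' p.1 p.2 ^ 2) := (hf'meas.pow_const 2)
    exact (h1.aemeasurable.div hγprod).aestronglyMeasurable
  have hBprod : Integrable (fun p : ℝ × ℝ => f' p.1 p.2 ^ 2 / γ p.2) (μ.prod volume) := by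
    refine hfin.mono' hBmeas (Eventually.of_forall fun p => ?_)
    rw [Real.norm_eq_abs, abs_of_nonneg (div_nonneg (sq_nonneg _) (hγpos _).le)]
    exact div_le_div₀ (by positivity) (le_add_of_nonneg_left (sq_nonneg _)) (hγpos _) le_rfl
  -- Integrability of f² on the product
  have hsqprod : Integrable (fun p : ℝ × ℝ => f p.1 p.2 ^ 2) (μ.prod volume) := by
    refine (hfin.const_mul C).mono'
      ((hfmeas.pow_const 2).aestronglyMeasurable) (Eventually.of_forall fun p => ?_)
    rw [Real.norm_eq_abs, abs_of_nonneg (sq_nonneg _)]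
    have h1 : f p.1 p.2 ^ 2 / C ≤ (f p.1 p.2 ^ 2 + f' p.1 p.2 ^ 2) / γ p.2 :=
      div_le_div₀ (by positivity) (le_add_of_nonneg_right (sq_nonneg _)) (hγpos _) (hC _)
    calc f p.1 p.2 ^ 2 = C * (f p.1 p.2 ^ 2 / C) := by field_simp
      _ ≤ C * ((f p.1 p.2 ^ 2 + f' p.1 p.2 ^ 2) / γ p.2) :=
          mul_le_mul_of_nonneg_left h1 hCpos.le
  -- slice facts
  have haet_sq : ∀ᵐ t ∂μ, Integrable (fun x => f t x ^ 2) := hsqprod.prod_right_ae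
  have haet_B : ∀ᵐ t ∂μ, Integrable (fun x => f' t x ^ 2 / γ x) := hBprod.prod_right_ae
  have haet_mem : ∀ᵐ t ∂μ, t ∈ Set.Icc 0 T :=
    (ae_restrict_mem measurableSet_Ioc).mono fun t ht => Set.Ioc_subset_Icc_self ht
  -- integrability of t ↦ ∫ₓ B t x
  have hN : Integrable (fun t => ∫ x, f' t x ^ 2 / γ x) μ := by
    refine hBprod.integral_norm_prod_left.congr (Eventually.of_forall fun t => ?_)
    refine integral_congr_ae (Eventually.of_forall fun x => ?_)
    show ‖f' t x ^ 2 / γ x‖ = f' t x ^ 2 / γ x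
    rw [Real.norm_eq_abs, abs_of_nonneg (div_nonneg (sq_nonneg _) (hγpos _).le)]
  -- the key pointwise (in t) facts
  have key : ∀ᵐ t ∂μ, (∀ x, f t x = -∫ s in Ioi x, f' t s) ∧ (∫ x, f' t x) = 0 ∧
      (∀ x, f t x ^ 2 ≤ (∫ s, f' t s ^ 2 / γ s) * ∫ s in Ioi x, γ s) ∧
      (∀ x, f t x ^ 2 ≤ (∫ s, f' t s ^ 2 / γ s) * ∫ s in Iic x, γ s) := by
    filter_upwards [haet_sq, haet_B, haet_mem] with t hsq hBt hmem
    have hf't_meas : Measurable (f' t) := hf'meas.of_uncurry_left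
    have hf'int : Integrable (f' t) := by
      refine ((hBt.add hγint).div_const 2).mono'
        hf't_meas.aestronglyMeasurable (Eventually.of_forall fun x => ?_)
      simp only [Pi.add_apply, Real.norm_eq_abs]
      have key2 : |f' t x| * 2 ≤ f' t x ^ 2 / γ x + γ x := by
        rw [div_add' _ _ _ (hγpos x).ne', le_div_iff₀ (hγpos x)]
        nlinarith [sq_nonneg (|f' t x| - γ x), sq_abs (f' t x), (hγpos x).le, abs_nonneg (f' t x)]
      linarith
    -- limits at +∞
    have hIoi : ∀ a : ℝ, Tendsto (f t) atTop (nhds (f t a + ∫ s in Ioi a, f' t s)) := by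
      intro a
      have h1 := intervalIntegral_tendsto_integral_Ioi a hf'int.integrableOn tendsto_id
      refine (h1.const_add (f t a)).congr fun b => ?_
      have := hFTC t hmem a b
      simp only [id] at this ⊢
      linarith
    have htopx : ∀ x, f t x + ∫ s in Ioi x, f' t s = 0 := fun x =>
      aux_limit_zero_atTop hsq (hIoi x)
    -- limits at -∞
    have hIic : ∀ b : ℝ, Tendsto (f t) atBot (nhds (f t b - ∫ s in Iic b, f' t s)) := by
      intro b
      have h1 := intervalIntegral_tendsto_integral_Iic b hf'int.integrableOn tendsto_id
      refine (tendsto_const_nhds.sub h1).congr fun a => ?_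
      have := hFTC t hmem a b
      simp only [id] at this ⊢
      linarith
    have hbotx : ∀ x, f t x - ∫ s in Iic x, f' t s = 0 := fun x =>
      aux_limit_zero_atBot hsq (hIic x)
    have hBnn : 0 ≤ᵐ[(volume : Measure ℝ)] fun s => f' t s ^ 2 / γ s :=
      Eventually.of_forall fun s => div_nonneg (sq_nonneg _) (hγpos _).le
    have hbd : ∀ (S : Set ℝ), (∫ s in S, |f' t s|) ^ 2
        ≤ (∫ s, f' t s ^ 2 / γ s) * ∫ s in S, γ s := by
      intro S
      calc (∫ s in S, |f' t s|) ^ 2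
          ≤ (∫ s in S, f' t s ^ 2 / γ s) * ∫ s in S, γ s :=
            aux_cauchy_schwarz hγpos hγae (f' t) hf't_meas S hBt.integrableOn
              hγint.integrableOn
        _ ≤ (∫ s, f' t s ^ 2 / γ s) * ∫ s in S, γ s :=
            mul_le_mul_of_nonneg_right (setIntegral_le_integral hBt hBnn)
              (integral_nonneg fun s => (hγpos s).le)
    refine ⟨fun x => by linarith [htopx x], ?_, fun x => ?_, fun x => ?_⟩
    · have h := integral_Iic_add_Ioi (b := (0 : ℝ)) hf'int.integrableOn hf'int.integrableOn
      have h1 := htopx 0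
      have h2 := hbotx 0
      linarith
    · -- bound via Ioi
      have hfx : f t x = -∫ s in Ioi x, f' t s := by linarith [htopx x]
      calc f t x ^ 2 = |∫ s in Ioi x, f' t s| ^ 2 := by rw [← sq_abs, hfx, abs_neg]
        _ ≤ (∫ s in Ioi x, |f' t s|) ^ 2 := by
            apply pow_le_pow_left₀ (abs_nonneg _)
            simpa [Real.norm_eq_abs] using
              norm_integral_le_integral_norm (μ := (volume : Measure ℝ).restrict (Ioi x)) (f' t)
        _ ≤ _ := hbd (Ioi x)
    · -- bound via Iic
      have hfx : f t x = ∫ s in Iic x, f' t s := by linarith [hbotx x]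
      calc f t x ^ 2 = |∫ s in Iic x, f' t s| ^ 2 := by rw [← sq_abs, hfx]
        _ ≤ (∫ s in Iic x, |f' t s|) ^ 2 := by
            apply pow_le_pow_left₀ (abs_nonneg _)
            simpa [Real.norm_eq_abs] using
              norm_integral_le_integral_norm (μ := (volume : Measure ℝ).restrict (Iic x)) (f' t)
        _ ≤ _ := hbd (Iic x)
  -- assemble
  have hupper_top : ∀ x : ℝ, ∫ t in Set.Ioc (0 : ℝ) T, f t x ^ 2
      ≤ (∫ t, (∫ s, f' t s ^ 2 / γ s) ∂μ) * ∫ s in Ioi x, γ s := by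
    intro x
    have h1 : ∀ᵐ t ∂μ, f t x ^ 2 ≤ (∫ s, f' t s ^ 2 / γ s) * ∫ s in Ioi x, γ s :=
      key.mono fun t ht => ht.2.2.1 x
    calc ∫ t in Set.Ioc (0 : ℝ) T, f t x ^ 2
        ≤ ∫ t, (∫ s, f' t s ^ 2 / γ s) * (∫ s in Ioi x, γ s) ∂μ :=
          integral_mono_of_nonneg (Eventually.of_forall fun t => sq_nonneg _)
            (hN.mul_const _) h1
      _ = (∫ t, (∫ s, f' t s ^ 2 / γ s) ∂μ) * ∫ s in Ioi x, γ s := integral_mul_const _ _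
  have hupper_bot : ∀ x : ℝ, ∫ t in Set.Ioc (0 : ℝ) T, f t x ^ 2
      ≤ (∫ t, (∫ s, f' t s ^ 2 / γ s) ∂μ) * ∫ s in Iic x, γ s := by
    intro x
    have h1 : ∀ᵐ t ∂μ, f t x ^ 2 ≤ (∫ s, f' t s ^ 2 / γ s) * ∫ s in Iic x, γ s :=
      key.mono fun t ht => ht.2.2.2 x
    calc ∫ t in Set.Ioc (0 : ℝ) T, f t x ^ 2
        ≤ ∫ t, (∫ s, f' t s ^ 2 / γ s) * (∫ s in Iic x, γ s) ∂μ :=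
          integral_mono_of_nonneg (Eventually.of_forall fun t => sq_nonneg _)
            (hN.mul_const _) h1
      _ = (∫ t, (∫ s, f' t s ^ 2 / γ s) ∂μ) * ∫ s in Iic x, γ s := integral_mul_const _ _
  have hlow : ∀ x : ℝ, (0:ℝ) ≤ ∫ t in Set.Ioc (0 : ℝ) T, f t x ^ 2 := fun x =>
    integral_nonneg fun t => sq_nonneg _
  refine ⟨?_, ?_, key.mono fun t ht => ⟨Eventually.of_forall fun y => ht.1 y, ht.2.1⟩⟩
  · refine tendsto_of_tendsto_of_tendsto_of_le_of_le' tendsto_const_nhds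
      (by simpa using (aux_tail_top hγint).const_mul (∫ t, (∫ s, f' t s ^ 2 / γ s) ∂μ))
      (Eventually.of_forall hlow) (Eventually.of_forall hupper_top)
  · refine tendsto_of_tendsto_of_tendsto_of_le_of_le' tendsto_const_nhds
      (by simpa using (aux_tail_bot hγint).const_mul (∫ t, (∫ s, f' t s ^ 2 / γ s) ∂μ))
      (Eventually.of_forall hlow) (Eventually.of_forall hupper_bot)
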